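/- For all u, v ∈ T the following hold: (1) Σ_{i=0}^{3} (i+1)·ρ^i(u − ρ(u)) = −5·ρ⁴(u); (2) the integer Σ_{i=0}^{3} (i+1)·⟨ρ^i(u), v⟩ is divisible by 5. (Hence the map φ(u) = (1/5)Σ_{i=0}^{3}(i+1)ρ^i(u) takes values in the dual lattice T* and sends (1−ρ)T into T.) -/
import Mathlib


open Matrix

/-- Gram matrix of `T = U ⊕ V ⊕ A₄ ⊕ A₄` (block diagonal, in the basis
`e, f, x, y, e₁, …, e₄, e₁', …, e₄'`). -/
def G : Matrix (Fin 12) (Fin 12) ℤ :=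
  !![0, 1, 0, 0, 0, 0, 0, 0, 0, 0, 0, 0;
     1, 0, 0, 0, 0, 0, 0, 0, 0, 0, 0, 0;
     0, 0, 2, 1, 0, 0, 0, 0, 0, 0, 0, 0;
     0, 0, 1, -2, 0, 0, 0, 0, 0, 0, 0, 0;
     0, 0, 0, 0, -2, 1, 0, 0, 0, 0, 0, 0;
     0, 0, 0, 0, 1, -2, 1, 0, 0, 0, 0, 0;
     0, 0, 0, 0, 0, 1, -2, 1, 0, 0, 0, 0;
     0, 0, 0, 0, 0, 0, 1, -2, 0, 0, 0, 0;
     0, 0, 0, 0, 0, 0, 0, 0, -2, 1, 0, 0;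
     0, 0, 0, 0, 0, 0, 0, 0, 1, -2, 1, 0;
     0, 0, 0, 0, 0, 0, 0, 0, 0, 1, -2, 1;
     0, 0, 0, 0, 0, 0, 0, 0, 0, 0, 1, -2]

/-- The matrix of `ρ = ρ₀ ⊕ ρ₄ ⊕ ρ₄` (block diagonal). -/
def ρ : Matrix (Fin 12) (Fin 12) ℤ :=
  !![0, -1, 0, 0, 0, 0, 0, 0, 0, 0, 0, 0;
     -1, -1, 1, 3, 0, 0, 0, 0, 0, 0, 0, 0;
     0, 0, -1, -1, 0, 0, 0, 0, 0, 0, 0, 0;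
     0, -1, 0, 1, 0, 0, 0, 0, 0, 0, 0, 0;
     0, 0, 0, 0, 0, 0, 0, -1, 0, 0, 0, 0;
     0, 0, 0, 0, 1, 0, 0, -1, 0, 0, 0, 0;
     0, 0, 0, 0, 0, 1, 0, -1, 0, 0, 0, 0;
     0, 0, 0, 0, 0, 0, 1, -1, 0, 0, 0, 0;
     0, 0, 0, 0, 0, 0, 0, 0, 0, 0, 0, -1;
     0, 0, 0, 0, 0, 0, 0, 0, 1, 0, 0, -1;
     0, 0, 0, 0, 0, 0, 0, 0, 0, 1, 0, -1;
     0, 0, 0, 0, 0, 0, 0, 0, 0, 0, 1, -1]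

/-- The bilinear form of the lattice `T`: `⟨u, v⟩ = uᵀ G v`. -/
def B (u v : Fin 12 → ℤ) : ℤ := u ⬝ᵥ G.mulVec v


/-- `(Gᵀ·M)/5` where `M = 1 + 2ρ + 3ρ² + 4ρ³`. -/
def Naux : Matrix (Fin 12) (Fin 12) ℤ :=
  !![1, 0, 0, -1, 0, 0, 0, 0, 0, 0, 0, 0;
     0, 1, 1, -1, 0, 0, 0, 0, 0, 0, 0, 0;
     -1, 0, 1, 1, 0, 0, 0, 0, 0, 0, 0, 0;
     -2, -1, 0, 4, 0, 0, 0, 0, 0, 0, 0, 0;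
     0, 0, 0, 0, 0, 1, -1, 0, 0, 0, 0, 0;
     0, 0, 0, 0, 0, 0, 1, -1, 0, 0, 0, 0;
     0, 0, 0, 0, 0, 0, 0, 1, 0, 0, 0, 0;
     0, 0, 0, 0, -1, 0, 0, 0, 0, 0, 0, 0;
     0, 0, 0, 0, 0, 0, 0, 0, 0, 1, -1, 0;
     0, 0, 0, 0, 0, 0, 0, 0, 0, 0, 1, -1;
     0, 0, 0, 0, 0, 0, 0, 0, 0, 0, 0, 1;
     0, 0, 0, 0, 0, 0, 0, 0, -1, 0, 0, 0]

lemma key1 : ((1:ℤ)+1-1) • ((ρ^0) - ρ^(0+1)) + (((1:ℕ):ℤ)+1) • ((ρ^1) - ρ^(1+1))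
    + (((2:ℕ):ℤ)+1) • ((ρ^2) - ρ^(2+1)) + (((3:ℕ):ℤ)+1) • ((ρ^3) - ρ^(3+1))
    = (-5:ℤ) • ρ^4 := by decide

lemma key2 : Matrix.transpose G *
    (((1:ℤ)+1-1) • (ρ^0) + (((1:ℕ):ℤ)+1) • (ρ^1) + (((2:ℕ):ℤ)+1) • (ρ^2)
      + (((3:ℕ):ℤ)+1) • (ρ^3)) = (5:ℤ) • Naux := by decide

theorem stmt7 :
    (∀ u : Fin 12 → ℤ,
      ∑ i ∈ Finset.range 4, ((i : ℤ) + 1) • (ρ ^ i).mulVec (u - ρ.mulVec u) =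
        (-5 : ℤ) • (ρ ^ 4).mulVec u) ∧
    (∀ u v : Fin 12 → ℤ,
      (5 : ℤ) ∣ ∑ i ∈ Finset.range 4, ((i : ℤ) + 1) * B ((ρ ^ i).mulVec u) v) := by
  constructor
  · intro u
    have e : ∀ i : ℕ, ((i : ℤ) + 1) • (ρ ^ i).mulVec (u - ρ.mulVec u) =
        (((i : ℤ) + 1) • (ρ ^ i - ρ ^ (i + 1))).mulVec u := by
      intro i
      rw [Matrix.mulVec_sub, Matrix.mulVec_mulVec, ← pow_succ, ← Matrix.sub_mulVec,
        Matrix.smul_mulVec]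
    simp only [e]
    rw [← Matrix.smul_mulVec]
    rw [show (4:ℕ) = 3+1 from rfl, Finset.sum_range_succ, Finset.sum_range_succ,
      Finset.sum_range_succ, Finset.sum_range_one]
    rw [← Matrix.add_mulVec, ← Matrix.add_mulVec, ← Matrix.add_mulVec]
    rw [show ((0:ℕ):ℤ) + 1 = (1:ℤ)+1-1 from by norm_num, key1]
  · intro u v
    have e : ∀ i : ℕ, ((i : ℤ) + 1) * B ((ρ ^ i).mulVec u) v =
        ((((i : ℤ) + 1) • (ρ ^ i)).mulVec u) ⬝ᵥ G.mulVec v := by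
      intro i
      rw [B, Matrix.smul_mulVec, smul_dotProduct, smul_eq_mul]
    simp only [e]
    rw [show (4:ℕ) = 3+1 from rfl, Finset.sum_range_succ, Finset.sum_range_succ,
      Finset.sum_range_succ, Finset.sum_range_one]
    rw [← add_dotProduct, ← add_dotProduct, ← add_dotProduct,
      ← Matrix.add_mulVec, ← Matrix.add_mulVec, ← Matrix.add_mulVec]
    rw [Matrix.dotProduct_mulVec, ← Matrix.mulVec_transpose, Matrix.mulVec_mulVec]
    rw [show ((0:ℕ):ℤ) + 1 = (1:ℤ)+1-1 from by norm_num, key2]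
    rw [Matrix.smul_mulVec, smul_dotProduct, smul_eq_mul]
    exact Dvd.intro _ rfl
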